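/- For every formula φ, every maximally-consistent base ℬ, and every set of S5-modal relations 𝔯_A, either ⊩_{ℬ,𝔯_A} φ or ⊩_{ℬ,𝔯_A} φ→⊥ (law of excluded middle at maximally-consistent bases). -/
import Mathlib


/-- A base rule: a finite set of premiss atoms and a conclusion atom. -/
abbrev Rule := Finset ℕ × ℕ

/-- A base is a collection of base rules. -/
abbrev Base := Set Rule

/-- Derivability of an atom in a base: closure of ∅ under the rules. -/
inductive Deriv (B : Base) : ℕ → Prop where
  | step (L : Finset ℕ) (p : ℕ) (mem : (L, p) ∈ B)
      (prem : ∀ q ∈ L, Deriv B q) : Deriv B p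

/-- A base is inconsistent iff every atom is derivable in it. -/
def Inconsistent (B : Base) : Prop := ∀ p : ℕ, Deriv B p

/-- Formulae of the multi-agent modal language over agents `A`. -/
inductive Form (A : Type) where
  | atom : ℕ → Form A
  | bot  : Form A
  | imp  : Form A → Form A → Form A
  | K    : A → Form A → Form A

/-- Negation abbreviation ¬φ := φ → ⊥. -/
def Form.neg {A : Type} (φ : Form A) : Form A := Form.imp φ Form.bot

/-- Validity at a base given a family of relations on bases. -/
def Valid {A : Type} (R : A → Base → Base → Prop) : Base → Form A → Prop
  | B, .atom p => Deriv B p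
  | B, .bot => ∀ p : ℕ, Deriv B p
  | B, .imp φ ψ => ∀ C : Base, B ⊆ C → Valid R C φ → Valid R C ψ
  | B, .K a φ => ∀ C : Base, R a B C → Valid R C φ

/-- Validity of φ at ℬ from a (nonempty) set of assumptions Γ. -/
def GammaValid {A : Type} (R : A → Base → Base → Prop)
    (Γ : Set (Form A)) (B : Base) (φ : Form A) : Prop :=
  ∀ C : Base, B ⊆ C → (∀ ψ ∈ Γ, Valid R C ψ) → Valid R C φ

def Euclidean {X : Sort*} (r : X → X → Prop) : Prop :=
  ∀ x y z, r x y → r x z → r y z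

/-- S5-modal relations on bases. -/
structure S5Rel (r : Base → Base → Prop) : Prop where
  incon_succ : ∀ B, Inconsistent B →
    (∃ C, r B C ∧ Inconsistent C) ∧ ∀ D, r B D → Inconsistent D
  con_succ : ∀ B, ¬ Inconsistent B → ∀ C, r B C → ¬ Inconsistent C
  zig : ∀ B C, r B C → ∀ D, B ⊆ D → ¬ Inconsistent D → ∃ E, C ⊆ E ∧ r D E
  zag : ∀ B C, r B C → ¬ Inconsistent C → ∀ D, D ⊆ B → ∃ E, E ⊆ C ∧ r D E
  refl : ∀ B, r B B
  trans : ∀ B C D, r B C → r C D → r B D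
  eucl : ∀ B C D, r B C → r B D → r C D

/-- Maximally-consistent bases. -/
def MaxCon (B : Base) : Prop :=
  ¬ Inconsistent B ∧ ∀ δ : Rule, δ ∈ B ∨ Inconsistent (insert δ B)

/-- A formula is valid iff it is valid at every base for every family of S5-modal relations. -/
def ValidAll {A : Type} (φ : Form A) : Prop :=
  ∀ R : A → Base → Base → Prop, (∀ a, S5Rel (R a)) → ∀ B : Base, Valid R B φ

lemma deriv_mono {B C : Base} (h : B ⊆ C) {p : ℕ} (hd : Deriv B p) : Deriv C p := by
  induction hd with
  | step L p mem prem ih => exact .step L p (h mem) ih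

lemma incon_mono {B C : Base} (h : B ⊆ C) (hi : Inconsistent B) : Inconsistent C :=
  fun p => deriv_mono h (hi p)

lemma incon_valid {A : Type} (R : A → Base → Base → Prop) (hR : ∀ a, S5Rel (R a))
    (φ : Form A) : ∀ C : Base, Inconsistent C → Valid R C φ := by
  induction φ with
  | atom p => exact fun C hC => hC p
  | bot => exact fun C hC => hC
  | imp φ ψ ihφ ihψ => exact fun C hC D hCD _ => ihψ D (incon_mono hCD hC)
  | K a φ ih => exact fun C hC D hD => ih D (((hR a).incon_succ C hC).2 D hD)

lemma maxcon_superset {B C : Base} (hB : MaxCon B) (h : B ⊆ C)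
    (hC : ¬ Inconsistent C) : C = B := by
  apply Set.Subset.antisymm _ h
  intro δ hδ
  rcases hB.2 δ with h1 | h1
  · exact h1
  · exact absurd (incon_mono (Set.insert_subset hδ h) h1) hC

/-- Law of excluded middle at maximally-consistent bases. -/
theorem stmt2 {A : Type} (φ : Form A) (B : Base) (hB : MaxCon B)
    (R : A → Base → Base → Prop) (hR : ∀ a, S5Rel (R a)) :
    Valid R B φ ∨ Valid R B (φ.imp .bot) := by
  by_cases h : Valid R B φ
  · exact Or.inl h
  · right
    intro C hBC hφ
    by_cases hC : Inconsistent C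
    · exact hC
    · rw [maxcon_superset hB hBC hC] at hφ
      exact absurd hφ h
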